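/- Let n ≥ 1, let x ∈ {0,1}^n, and let q ∈ (0,1). The expected number of runs of 0s in a trace of x obtained by passing x through an i.i.d. deletion channel with deletion probability q is E[R_{x,0}] = (1−q)·( n − w_H(x) − ((1−q)/q)·Σ_{i,j ∈ S̄_x, i<j} q^{j−i} ). -/

import Mathlib

open Finset

/-- Number of deletions in a deletion pattern (number of `1`s in `ω`). -/
def wt {n : ℕ} (ω : Fin n → Bool) : ℕ := (univ.filter fun j => ω j = true).card

/-- Trace of `x` under deletion pattern `ω`: the subsequence of bits `x j`
at the positions `j` with `ω j = 0`, in increasing order of position. -/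
def trc {n : ℕ} (x ω : Fin n → Bool) : List Bool :=
  ((List.finRange n).filter fun j => ω j = false).map x

/-- Total number of runs (maximal blocks of equal bits) in a binary list. -/
def numRuns (l : List Bool) : ℕ := (l.destutter (· ≠ ·)).length

/-- Number of runs of `0`s in a binary list. -/
def numZeroRuns (l : List Bool) : ℕ := (l.destutter (· ≠ ·)).count false

/-- Number of runs of `1`s in a binary list. -/
def numOneRuns (l : List Bool) : ℕ := (l.destutter (· ≠ ·)).count true


def zeroStarts : Option Bool → List Bool → ℕ
  | _, [] => 0
  | prev, b :: t => (if b = false ∧ prev ≠ some false then 1 else 0) + zeroStarts (some b) t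

lemma zg_eq : ∀ (t : List Bool) (a : Bool),
    (List.destutter' (· ≠ ·) a t).count false
      = (if a = false then 1 else 0) + zeroStarts (some a) t
  | [], a => by cases a <;> simp [List.destutter', zeroStarts]
  | b :: t, a => by
      have ihb := zg_eq t b
      have iha := zg_eq t a
      cases a <;> cases b <;> simp_all [List.destutter', zeroStarts] <;> omega

lemma numZeroRuns_eq_zeroStarts (l : List Bool) : numZeroRuns l = zeroStarts none l := by
  cases l with
  | nil => simp [numZeroRuns, zeroStarts, List.destutter]
  | cons b t =>
      have := zg_eq t b
      cases b <;> simp_all [numZeroRuns, List.destutter, zeroStarts]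

def traceStarts : Option Bool → List (Bool × Bool) → ℕ
  | _, [] => 0
  | prev, p :: t =>
    if p.2 = true then traceStarts prev t
    else (if p.1 = false ∧ prev ≠ some false then 1 else 0) + traceStarts (some p.1) t

lemma zeroStarts_filter : ∀ (l : List (Bool × Bool)) (prev : Option Bool),
    zeroStarts prev ((l.filter fun p => p.2 = false).map Prod.fst) = traceStarts prev l
  | [], prev => by simp [zeroStarts, traceStarts]
  | ⟨b, d⟩ :: t, prev => by
      have ih := zeroStarts_filter t
      simp at ih
      cases d <;> simp [traceStarts, zeroStarts, ih]

lemma trc_eq {n : ℕ} (x ω : Fin n → Bool) :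
    trc x ω = ((List.ofFn fun i => (x i, ω i)).filter fun p => p.2 = false).map Prod.fst := by
  simp [trc, List.ofFn_eq_map, List.filter_map, List.map_map, Function.comp_def]

def isStartP {n : ℕ} (prev : Option Bool) (x ω : Fin n → Bool) (i : Fin n) : Prop :=
  ω i = false ∧ x i = false ∧
    ((∀ j, j < i → ω j = true) → prev ≠ some false) ∧
    (∀ j, j < i → ω j = false → x j = false → ∃ k, j < k ∧ k < i ∧ ω k = false)

instance {n : ℕ} (prev : Option Bool) (x ω : Fin n → Bool) :
    DecidablePred (isStartP prev x ω) := fun i => by unfold isStartP; infer_instance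

lemma isStartP_succ {n : ℕ} (prev : Option Bool) (x ω : Fin (n+1) → Bool) (i : Fin n) :
    isStartP prev x ω i.succ ↔
      isStartP (if ω 0 = true then prev else some (x 0))
        (x ∘ Fin.succ) (ω ∘ Fin.succ) i := by
  unfold isStartP
  simp only [Function.comp_apply]
  cases hω0 : ω 0 with
  | true =>
      simp only [if_pos rfl]
      constructor
      · rintro ⟨h1, h2, h3, h4⟩
        refine ⟨h1, h2, fun hall => h3 fun j hj => ?_, fun j hj hωj hxj => ?_⟩
        · cases j using Fin.cases with
          | zero => exact hω0
          | succ j' => exact hall j' (by simpa [Fin.succ_lt_succ_iff] using hj)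
        · obtain ⟨k, hk1, hk2, hk3⟩ := h4 j.succ (by simpa [Fin.succ_lt_succ_iff] using hj) hωj hxj
          have hk0 : k ≠ 0 := Fin.pos_iff_ne_zero.mp (lt_of_le_of_lt (Fin.zero_le _) hk1)
          obtain ⟨k', rfl⟩ := Fin.exists_succ_eq.2 hk0
          exact ⟨k', by simpa [Fin.succ_lt_succ_iff] using hk1,
            by simpa [Fin.succ_lt_succ_iff] using hk2, hk3⟩
      · rintro ⟨h1, h2, h3, h4⟩
        refine ⟨h1, h2, fun hall => h3 fun j hj => hall j.succ (by simpa [Fin.succ_lt_succ_iff] using hj),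
          fun j hj hωj hxj => ?_⟩
        cases j using Fin.cases with
        | zero => simp [hω0] at hωj
        | succ j' =>
            obtain ⟨k, hk1, hk2, hk3⟩ := h4 j' (by simpa [Fin.succ_lt_succ_iff] using hj) hωj hxj
            exact ⟨k.succ, by simpa [Fin.succ_lt_succ_iff] using hk1,
              by simpa [Fin.succ_lt_succ_iff] using hk2, hk3⟩
  | false =>
      simp only [hω0, Bool.false_eq_true, if_neg (fun h => h)]
      constructor
      · rintro ⟨h1, h2, h3, h4⟩
        refine ⟨h1, h2, fun hall hx0 => ?_, fun j hj hωj hxj => ?_⟩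
        · -- x 0 = false case leads to contradiction via h4 at j = 0
          simp only [Option.some_inj] at hx0
          obtain ⟨k, hk1, hk2, hk3⟩ := h4 0 (Fin.succ_pos i) hω0 hx0
          obtain ⟨k', rfl⟩ := Fin.exists_succ_eq.2 (Fin.pos_iff_ne_zero.mp hk1)
          have := hall k' (by simpa [Fin.succ_lt_succ_iff] using hk2)
          simp [this] at hk3
        · obtain ⟨k, hk1, hk2, hk3⟩ := h4 j.succ (by simpa [Fin.succ_lt_succ_iff] using hj) hωj hxj
          have hk0 : k ≠ 0 := Fin.pos_iff_ne_zero.mp (lt_of_le_of_lt (Fin.zero_le _) hk1)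
          obtain ⟨k', rfl⟩ := Fin.exists_succ_eq.2 hk0
          exact ⟨k', by simpa [Fin.succ_lt_succ_iff] using hk1,
            by simpa [Fin.succ_lt_succ_iff] using hk2, hk3⟩
      · rintro ⟨h1, h2, h3, h4⟩
        refine ⟨h1, h2, fun hall => absurd (hall 0 (Fin.succ_pos i)) (by simp [hω0]),
          fun j hj hωj hxj => ?_⟩
        cases j using Fin.cases with
        | zero =>
            by_cases hall : ∀ j : Fin n, j < i → ω j.succ = true
            · exact absurd (h3 hall) (by simp [hxj])
            · push_neg at hall
              obtain ⟨k, hk1, hk2⟩ := hall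
              refine ⟨k.succ, Fin.succ_pos k, by simpa [Fin.succ_lt_succ_iff] using hk1, ?_⟩
              cases h : ω k.succ
              · rfl
              · exact absurd h hk2
        | succ j' =>
            obtain ⟨k, hk1, hk2, hk3⟩ := h4 j' (by simpa [Fin.succ_lt_succ_iff] using hj) hωj hxj
            exact ⟨k.succ, by simpa [Fin.succ_lt_succ_iff] using hk1,
              by simpa [Fin.succ_lt_succ_iff] using hk2, hk3⟩

lemma traceStarts_ofFn : ∀ (n : ℕ) (x ω : Fin n → Bool) (prev : Option Bool),
    traceStarts prev (List.ofFn fun i => (x i, ω i)) =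
      ∑ i : Fin n, (if isStartP prev x ω i then 1 else 0)
  | 0, x, ω, prev => by simp [traceStarts]
  | n + 1, x, ω, prev => by
      have ih := traceStarts_ofFn n (x ∘ Fin.succ) (ω ∘ Fin.succ)
      simp only [Function.comp_apply] at ih
      have hz : ∀ j : Fin (n+1), ¬ j < 0 := fun j hj => by simp [Fin.lt_def] at hj
      rw [List.ofFn_succ, Fin.sum_univ_succ]
      have hsucc : ∀ i : Fin n, (if isStartP prev x ω i.succ then (1:ℕ) else 0)
          = if isStartP (if ω 0 = true then prev else some (x 0)) (x ∘ Fin.succ) (ω ∘ Fin.succ) i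
            then 1 else 0 := fun i => by
        rw [if_congr (isStartP_succ prev x ω i) rfl rfl]
      rw [show (∑ i : Fin n, if isStartP prev x ω i.succ then (1:ℕ) else 0)
          = ∑ i : Fin n, (if isStartP (if ω 0 = true then prev else some (x 0))
              (x ∘ Fin.succ) (ω ∘ Fin.succ) i then 1 else 0) from
        Finset.sum_congr rfl fun i _ => hsucc i]
      cases hω0 : ω 0 with
      | true =>
          have h0 : ¬ isStartP prev x ω 0 := fun h => by
            rcases h with ⟨h1, -⟩; rw [hω0] at h1; exact Bool.true_eq_false.mp h1
          simp [traceStarts, h0, ih prev]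
      | false =>
          have h0 : isStartP prev x ω 0 ↔ (x 0 = false ∧ prev ≠ some false) := by
            constructor
            · rintro ⟨-, h2, h3, -⟩
              exact ⟨h2, h3 fun j hj => absurd hj (hz j)⟩
            · rintro ⟨h2, h3⟩
              exact ⟨hω0, h2, fun _ => h3, fun j hj _ _ => absurd hj (hz j)⟩
          simp [traceStarts, h0, ih (some (x 0))]

lemma numZeroRuns_trc {n : ℕ} (x ω : Fin n → Bool) :
    numZeroRuns (trc x ω) = ∑ i : Fin n, (if isStartP none x ω i then 1 else 0) := by
  rw [trc_eq, numZeroRuns_eq_zeroStarts, zeroStarts_filter, traceStarts_ofFn]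

lemma weight_eq_prod {n : ℕ} (q : ℝ) (ω : Fin n → Bool) :
    q ^ wt ω * (1 - q) ^ (n - wt ω) = ∏ i, (if ω i = true then q else 1 - q) := by
  rw [Finset.prod_ite, Finset.prod_const, Finset.prod_const, Finset.filter_not,
    Finset.card_sdiff_of_subset (Finset.filter_subset _ _), Finset.card_univ, Fintype.card_fin]
  rfl

lemma sum_weight_prod {n : ℕ} (q : ℝ) (g : Fin n → Bool → ℝ) :
    ∑ ω : Fin n → Bool, ∏ i, ((if ω i = true then q else 1 - q) * g i (ω i)) =
      ∏ i, ((1 - q) * g i false + q * g i true) := by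
  rw [← Fintype.prod_sum (f := fun i b => (if b = true then q else 1 - q) * g i b)]
  refine Finset.prod_congr rfl fun i _ => ?_
  simp [Fintype.sum_bool]
  ring

lemma W1 {n : ℕ} (q : ℝ) (i : Fin n) :
    ∑ ω : Fin n → Bool,
        q ^ wt ω * (1 - q) ^ (n - wt ω) * (if ω i = false then (1:ℝ) else 0) = 1 - q := by
  set g : Fin n → Bool → ℝ := fun k b =>
    if k = i then (if b = false then 1 else 0) else 1 with hg
  have key : ∀ ω : Fin n → Bool,
      q ^ wt ω * (1 - q) ^ (n - wt ω) * (if ω i = false then (1:ℝ) else 0)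
        = ∏ k, ((if ω k = true then q else 1 - q) * g k (ω k)) := by
    intro ω
    rw [Finset.prod_mul_distrib, ← weight_eq_prod,
      show (∏ k, g k (ω k)) = ∏ k, (if k = i then (if ω k = false then (1:ℝ) else 0) else 1)
        from rfl,
      Finset.prod_ite_eq' univ i (fun k => if ω k = false then (1:ℝ) else 0)]
    simp
  rw [Finset.sum_congr rfl fun ω _ => key ω, sum_weight_prod]
  have hval : ∀ k : Fin n, (1 - q) * g k false + q * g k true
      = (if k = i then 1 - q else 1) := by
    intro k
    by_cases h : k = i
    · simp [hg, h]
    · simp [hg, h]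
      try ring
  rw [Finset.prod_congr rfl fun k _ => hval k,
    Finset.prod_ite_eq' univ i (fun _ => (1 - q))]
  simp

lemma W2 {n : ℕ} (q : ℝ) {i j : Fin n} (hji : j < i) :
    ∑ ω : Fin n → Bool,
        q ^ wt ω * (1 - q) ^ (n - wt ω) *
          (if ω i = false ∧ ω j = false ∧ (∀ k, j < k → k < i → ω k = true)
            then (1:ℝ) else 0)
      = (1 - q) ^ 2 * q ^ ((i:ℕ) - (j:ℕ) - 1) := by
  have hij : i ≠ j := (ne_of_lt hji).symm
  set g : Fin n → Bool → ℝ := fun k b =>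
    if k = i then (if b = false then 1 else 0)
    else if k = j then (if b = false then 1 else 0)
    else if j < k ∧ k < i then (if b = true then 1 else 0) else 1 with hg
  have key : ∀ ω : Fin n → Bool,
      q ^ wt ω * (1 - q) ^ (n - wt ω) *
          (if ω i = false ∧ ω j = false ∧ (∀ k, j < k → k < i → ω k = true)
            then (1:ℝ) else 0)
        = ∏ k, ((if ω k = true then q else 1 - q) * g k (ω k)) := by
    intro ω
    rw [Finset.prod_mul_distrib, ← weight_eq_prod]
    congr 1
    by_cases hc : ω i = false ∧ ω j = false ∧ (∀ k, j < k → k < i → ω k = true)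
    · rw [if_pos hc, Finset.prod_eq_one]
      intro k _
      rcases hc with ⟨h1, h2, h3⟩
      by_cases hki : k = i
      · simp [hg, hki, h1]
      · by_cases hkj : k = j
        · simp [hg, hki, hkj, h2]
        · by_cases hbet : j < k ∧ k < i
          · simp [hg, hki, hkj, hbet, h3 k hbet.1 hbet.2]
          · simp [hg, hki, hkj, hbet]
    · rw [if_neg hc]
      by_cases h1 : ω i = false
      · by_cases h2 : ω j = false
        · have h3 : ∃ k, j < k ∧ k < i ∧ ω k ≠ true := by
            by_contra hcon
            push_neg at hcon
            exact hc ⟨h1, h2, fun k hk1 hk2 => hcon k hk1 hk2⟩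
          obtain ⟨k, hk1, hk2, hk3⟩ := h3
          refine (Finset.prod_eq_zero (Finset.mem_univ k) ?_).symm
          have hki : k ≠ i := ne_of_lt hk2
          have hkj : k ≠ j := (ne_of_lt hk1).symm
          simp [hg, hki, hkj, hk1, hk2, hk3]
        · refine (Finset.prod_eq_zero (Finset.mem_univ j) ?_).symm
          simp [hg, hij.symm, h2]
      · refine (Finset.prod_eq_zero (Finset.mem_univ i) ?_).symm
        simp [hg, h1]
  rw [Finset.sum_congr rfl fun ω _ => key ω, sum_weight_prod]
  have hval : ∀ k : Fin n, (1 - q) * g k false + q * g k true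
      = (if k = i then 1 - q else if k = j then 1 - q else if j < k ∧ k < i then q else 1) := by
    intro k
    by_cases hki : k = i
    · simp [hg, hki]
    · by_cases hkj : k = j
      · simp [hg, hki, hkj]
      · by_cases hbet : j < k ∧ k < i
        · simp [hg, hki, hkj, hbet]
        · simp [hg, hki, hkj, hbet]; try ring
  rw [Finset.prod_congr rfl fun k _ => hval k]
  have hiI : i ∉ Finset.Ioo j i := by simp
  have hjI : j ∉ Finset.Ioo j i := by simp
  have hiJ : i ∉ insert j (Finset.Ioo j i) := by simp [hij, hiI]
  have hout : ∀ k ∈ (univ : Finset (Fin n)), k ∉ insert i (insert j (Finset.Ioo j i)) →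
      (if k = i then 1 - q else if k = j then 1 - q else if j < k ∧ k < i then q else 1) = 1 := by
    intro k _ hk
    simp only [Finset.mem_insert, not_or] at hk
    rw [if_neg hk.1, if_neg hk.2.1, if_neg (by rw [← Finset.mem_Ioo]; exact hk.2.2)]
  rw [← Finset.prod_subset (Finset.subset_univ (insert i (insert j (Finset.Ioo j i)))) hout,
    Finset.prod_insert hiJ, Finset.prod_insert hjI, if_pos rfl,
    if_neg (Ne.symm hij), if_pos rfl]
  have hmid : ∀ k ∈ Finset.Ioo j i,
      (if k = i then 1 - q else if k = j then 1 - q else if j < k ∧ k < i then q else 1) = q := by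
    intro k hk
    rw [Finset.mem_Ioo] at hk
    rw [if_neg (ne_of_lt hk.2), if_neg (Ne.symm (ne_of_lt hk.1)), if_pos hk]
  rw [Finset.prod_congr rfl hmid, Finset.prod_const, Fin.card_Ioo]
  ring

lemma indicator_decomp {n : ℕ} (x ω : Fin n → Bool) (i : Fin n) (hxi : x i = false) :
    (if isStartP none x ω i then (1:ℝ) else 0)
      = (if ω i = false then 1 else 0)
        - ∑ j ∈ univ.filter (fun j : Fin n => x j = false ∧ j < i),
            (if ω i = false ∧ ω j = false ∧ (∀ k, j < k → k < i → ω k = true)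
              then (1:ℝ) else 0) := by
  by_cases hωi : ω i = false
  · by_cases hA : ∀ j, j < i → ω j = false → x j = false →
        ∃ k, j < k ∧ k < i ∧ ω k = false
    · have hs : isStartP none x ω i := ⟨hωi, hxi, fun _ => by simp, hA⟩
      rw [if_pos hs, if_pos hωi]
      rw [Finset.sum_congr rfl fun j hj => if_neg ?_]
      · simp
      · rintro ⟨-, hωj, hall⟩
        rw [Finset.mem_filter] at hj
        obtain ⟨k, hk1, hk2, hk3⟩ := hA j hj.2.2 hωj hj.2.1
        rw [hall k hk1 hk2] at hk3
        exact Bool.true_eq_false.mp hk3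
    · have h0 : ¬ isStartP none x ω i := fun h => hA h.2.2.2
      push_neg at hA
      obtain ⟨j₀, hj₀i, hωj₀, hxj₀, hnok⟩ := hA
      have hone : (univ.filter (fun j : Fin n => x j = false ∧ j < i)).filter
          (fun j => ω i = false ∧ ω j = false ∧ (∀ k, j < k → k < i → ω k = true))
          = {j₀} := by
        ext j
        simp only [Finset.mem_filter, Finset.mem_univ, true_and, Finset.mem_singleton]
        constructor
        · rintro ⟨⟨hxj, hji⟩, -, hωj, hall⟩
          rcases lt_trichotomy j j₀ with h | h | h
          · exact absurd (hall j₀ h hj₀i) (by simp [hωj₀])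
          · exact h
          · exact absurd hωj (hnok j h hji)
        · rintro rfl
          refine ⟨⟨hxj₀, hj₀i⟩, hωi, hωj₀, fun k hk1 hk2 => ?_⟩
          have := hnok k hk1 hk2
          cases h : ω k
          · exact absurd h this
          · rfl
      rw [if_neg h0, if_pos hωi, Finset.sum_boole, hone]
      simp
  · have h0 : ¬ isStartP none x ω i := fun h => hωi h.1
    rw [if_neg h0, if_neg hωi,
      Finset.sum_congr rfl fun j _ => if_neg (fun hc => hωi hc.1)]
    simp

/-- Expected number of runs of `0`s in a trace of `x` through the i.i.d. deletion
channel with deletion probability `q`. -/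
theorem expected_zero_runs (n : ℕ) (hn : 1 ≤ n) (x : Fin n → Bool)
    (q : ℝ) (hq0 : 0 < q) (hq1 : q < 1) :
    (∑ ω : Fin n → Bool,
        q ^ wt ω * (1 - q) ^ (n - wt ω) * (numZeroRuns (trc x ω) : ℝ)) =
      (1 - q) * ((n : ℝ) - ((univ.filter fun i : Fin n => x i = true).card : ℝ)
        - (1 - q) / q *
            ∑ i ∈ univ.filter (fun i : Fin n => x i = false),
              ∑ j ∈ univ.filter (fun j : Fin n => x j = false ∧ i < j),
                q ^ ((j : ℕ) - (i : ℕ))) := by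
  classical
  have hq' : q ≠ 0 := ne_of_gt hq0
  have h1 : ∀ ω : Fin n → Bool, (numZeroRuns (trc x ω) : ℝ)
      = ∑ i : Fin n, (if isStartP none x ω i then (1:ℝ) else 0) := by
    intro ω
    rw [numZeroRuns_trc, Nat.cast_sum]
    exact Finset.sum_congr rfl fun i _ => by split_ifs <;> simp
  have hswap : ∀ f : Fin n → Fin n → ℝ,
      (∑ i ∈ univ.filter (fun i : Fin n => x i = false),
        ∑ j ∈ univ.filter (fun j : Fin n => x j = false ∧ j < i), f i j)
      = ∑ i ∈ univ.filter (fun i : Fin n => x i = false),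
        ∑ j ∈ univ.filter (fun j : Fin n => x j = false ∧ i < j), f j i := by
    intro f
    have e1 : (∑ i ∈ univ.filter (fun i : Fin n => x i = false),
        ∑ j ∈ univ.filter (fun j : Fin n => x j = false ∧ j < i), f i j)
        = ∑ i : Fin n, ∑ j : Fin n,
            (if x i = false ∧ x j = false ∧ j < i then f i j else 0) := by
      rw [Finset.sum_filter]
      refine Finset.sum_congr rfl fun i _ => ?_
      by_cases hp : x i = false
      · rw [if_pos hp, Finset.sum_filter]
        exact Finset.sum_congr rfl fun j _ => by simp [hp, and_assoc]
      · rw [if_neg hp]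
        exact (Finset.sum_eq_zero fun j _ => if_neg (fun hc => hp hc.1)).symm
    have e2 : (∑ i ∈ univ.filter (fun i : Fin n => x i = false),
        ∑ j ∈ univ.filter (fun j : Fin n => x j = false ∧ i < j), f j i)
        = ∑ i : Fin n, ∑ j : Fin n,
            (if x i = false ∧ x j = false ∧ i < j then f j i else 0) := by
      rw [Finset.sum_filter]
      refine Finset.sum_congr rfl fun i _ => ?_
      by_cases hp : x i = false
      · rw [if_pos hp, Finset.sum_filter]
        exact Finset.sum_congr rfl fun j _ => by simp [hp, and_assoc]
      · rw [if_neg hp]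
        exact (Finset.sum_eq_zero fun j _ => if_neg (fun hc => hp hc.1)).symm
    rw [e1, e2, Finset.sum_comm]
    refine Finset.sum_congr rfl fun i _ => Finset.sum_congr rfl fun j _ => ?_
    exact if_congr (by tauto) rfl rfl
  have hcard : ((univ.filter fun i : Fin n => x i = false).card : ℝ)
      = (n : ℝ) - ((univ.filter fun i : Fin n => x i = true).card : ℝ) := by
    have hs : (univ.filter fun i : Fin n => x i = false)
        = univ \ (univ.filter fun i : Fin n => x i = true) := by
      ext i; simp
    rw [hs, Finset.card_sdiff_of_subset (Finset.filter_subset _ _), Finset.card_univ, Fintype.card_fin,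
      Nat.cast_sub (le_trans (Finset.card_filter_le _ _) (by rw [Finset.card_univ, Fintype.card_fin]))]
  calc (∑ ω : Fin n → Bool, q ^ wt ω * (1 - q) ^ (n - wt ω) * (numZeroRuns (trc x ω) : ℝ))
      = ∑ i : Fin n, ∑ ω : Fin n → Bool,
          q ^ wt ω * (1 - q) ^ (n - wt ω) * (if isStartP none x ω i then (1:ℝ) else 0) := by
        rw [Finset.sum_comm]
        exact Finset.sum_congr rfl fun ω _ => by rw [h1, Finset.mul_sum]
    _ = ∑ i ∈ univ.filter (fun i : Fin n => x i = false), ∑ ω : Fin n → Bool,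
          q ^ wt ω * (1 - q) ^ (n - wt ω) * (if isStartP none x ω i then (1:ℝ) else 0) := by
        symm
        apply Finset.sum_subset (Finset.filter_subset _ _)
        intro i _ hi
        simp only [Finset.mem_filter, Finset.mem_univ, true_and] at hi
        exact Finset.sum_eq_zero fun ω _ => by
          rw [if_neg (fun h => hi h.2.1), mul_zero]
    _ = ∑ i ∈ univ.filter (fun i : Fin n => x i = false),
          ((1 - q) - ∑ j ∈ univ.filter (fun j : Fin n => x j = false ∧ j < i),
            (1 - q)^2 * q ^ ((i:ℕ) - (j:ℕ) - 1)) := by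
        refine Finset.sum_congr rfl fun i hi => ?_
        simp only [Finset.mem_filter, Finset.mem_univ, true_and] at hi
        rw [Finset.sum_congr rfl fun ω _ => by
          rw [indicator_decomp x ω i hi, mul_sub, Finset.mul_sum]]
        rw [Finset.sum_sub_distrib, W1 q i]
        congr 1
        rw [Finset.sum_comm]
        exact Finset.sum_congr rfl fun j hj => W2 q (Finset.mem_filter.mp hj).2.2
    _ = (1 - q) * ((univ.filter fun i : Fin n => x i = false).card : ℝ)
          - (1 - q)^2 / q * ∑ i ∈ univ.filter (fun i : Fin n => x i = false),
              ∑ j ∈ univ.filter (fun j : Fin n => x j = false ∧ j < i),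
                q ^ ((i:ℕ) - (j:ℕ)) := by
        rw [Finset.sum_sub_distrib, Finset.sum_const, nsmul_eq_mul, mul_comm]
        congr 1
        rw [Finset.mul_sum]
        refine Finset.sum_congr rfl fun i _ => ?_
        rw [Finset.mul_sum]
        refine Finset.sum_congr rfl fun j hj => ?_
        have hji : (j : ℕ) < (i : ℕ) := (Finset.mem_filter.mp hj).2.2
        rw [show (i:ℕ) - (j:ℕ) = ((i:ℕ) - (j:ℕ) - 1) + 1 by omega, pow_succ]
        simp only [Nat.add_sub_cancel]
        field_simp
        ring
    _ = (1 - q) * ((n : ℝ) - ((univ.filter fun i : Fin n => x i = true).card : ℝ)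
        - (1 - q) / q *
            ∑ i ∈ univ.filter (fun i : Fin n => x i = false),
              ∑ j ∈ univ.filter (fun j : Fin n => x j = false ∧ i < j),
                q ^ ((j : ℕ) - (i : ℕ))) := by
        rw [hcard, hswap (fun i j => q ^ ((i:ℕ) - (j:ℕ)))]
        ring
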